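/- Fix integers N ≥ 1 and T ≥ 1 with N·T ≥ 3, and a learning rate η > 0. Let f_1, f_2, … : {1,…,N} → [0,∞) be nonnegative loss functions and run the MW¹ recursion with mixing parameter γ = 1/T. Then for any rounds t0 ≤ t1 with t1 − t0 + 1 ≤ T, the distributions q_t satisfy: Σ_{t=t0}^{t1} Σ_{x=1}^{N} q_t(x)·f_t(x) − min_{x∈{1,…,N}} Σ_{t=t0}^{t1} f_t(x) ≤ (2·log(N·T))/η + η · Σ_{t=t0}^{t1} Σ_{x=1}^{N} q_t(x)·f_t(x)². -/

import Mathlib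

set_option maxHeartbeats 1000000


open Finset

private lemma mw1_exp_neg_le_quad {z : ℝ} (hz : 0 ≤ z) :
    Real.exp (-z) ≤ 1 - z + z^2 := by
  rw [Real.exp_neg]
  have h1 : 1 + z ≤ Real.exp z := by linarith [Real.add_one_le_exp z]
  have h2 : (0:ℝ) < 1 + z := by linarith
  have h3 : (Real.exp z)⁻¹ ≤ (1+z)⁻¹ := inv_anti₀ h2 h1
  have h4 : (1+z)⁻¹ ≤ 1 - z + z^2 := by
    rw [inv_le_iff_one_le_mul₀ h2]
    nlinarith
  linarith

private lemma mw1_telescope_le (g h : ℕ → ℝ) (a b : ℕ) (hab : a ≤ b)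
    (H : ∀ t, a ≤ t → t ≤ b → g (t+1) ≤ g t + h t) :
    g (b+1) ≤ g a + ∑ t ∈ Icc a b, h t := by
  induction b, hab using Nat.le_induction with
  | base => simpa using H a le_rfl le_rfl
  | succ n hn ih =>
    have h1 := H (n+1) (by omega) le_rfl
    have ih' := ih (fun t ht1 ht2 => H t ht1 (by omega))
    rw [Finset.sum_Icc_succ_top (by omega)]
    linarith

private lemma mw1_exp_telescope (v c : ℕ → ℝ) (a b : ℕ) (hab : a ≤ b)
    (H : ∀ t, a ≤ t → t ≤ b → v t * Real.exp (c t) ≤ v (t+1)) :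
    v a * Real.exp (∑ t ∈ Icc a b, c t) ≤ v (b+1) := by
  induction b, hab using Nat.le_induction with
  | base => simpa using H a le_rfl le_rfl
  | succ n hn ih =>
    have ih' := ih (fun t ht1 ht2 => H t ht1 (by omega))
    have h1 := H (n+1) (by omega) le_rfl
    rw [Finset.sum_Icc_succ_top (by omega), Real.exp_add, ← mul_assoc]
    calc v a * Real.exp (∑ t ∈ Icc a n, c t) * Real.exp (c (n+1))
        ≤ v (n+1) * Real.exp (c (n+1)) :=
          mul_le_mul_of_nonneg_right ih' (Real.exp_nonneg _)
      _ ≤ v (n+2) := h1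

private lemma mw1_numeric (N T : ℕ) (hN : 1 ≤ N) (hT9 : 9 ≤ T) :
    1 + Real.log ((N:ℝ)*((T:ℝ)+1)) ≤ 2 * Real.log ((N:ℝ)*(T:ℝ)) := by
  have hN1 : (1:ℝ) ≤ N := by exact_mod_cast hN
  have hT1 : (9:ℝ) ≤ T := by exact_mod_cast hT9
  have key : Real.exp 1 * ((N:ℝ)*((T:ℝ)+1)) ≤ ((N:ℝ)*(T:ℝ))^2 := by
    have he : Real.exp 1 ≤ 3 := by linarith [Real.exp_one_lt_d9.le]
    have e1 : (N:ℝ)*(T:ℝ)^2 ≤ ((N:ℝ)*(T:ℝ))^2 := by nlinarith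
    have e2 : 3*((N:ℝ)*((T:ℝ)+1)) ≤ (N:ℝ)*(T:ℝ)^2 := by
      nlinarith [mul_le_mul_of_nonneg_left
        (by nlinarith : 3*((T:ℝ)+1) ≤ (T:ℝ)^2) (by linarith : (0:ℝ) ≤ (N:ℝ))]
    have e3 : (0:ℝ) ≤ (N:ℝ)*((T:ℝ)+1) := by positivity
    nlinarith
  have h1 : 1 + Real.log ((N:ℝ)*((T:ℝ)+1))
      = Real.log (Real.exp 1 * ((N:ℝ)*((T:ℝ)+1))) := by
    rw [Real.log_mul (Real.exp_ne_zero 1) (by positivity), Real.log_exp]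
  have h2 : 2 * Real.log ((N:ℝ)*(T:ℝ)) = Real.log (((N:ℝ)*(T:ℝ))^2) := by
    rw [Real.log_pow]; push_cast; ring
  rw [h1, h2]
  exact Real.log_le_log (by positivity) key

/-- Regret bound (with second-moment term) for the MW¹ recursion
with mixing parameter γ = 1/T, on nonnegative losses. -/
theorem mw1_regret_second_moment
    (N T : ℕ) (hN : 1 ≤ N) (hT : 1 ≤ T) (hNT : 3 ≤ N * T)
    (η : ℝ) (hη : 0 < η)
    (f : ℕ → Fin N → ℝ) (hf : ∀ t x, 0 ≤ f t x)
    (w : ℕ → Fin N → ℝ)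
    (hw1 : ∀ x, w 1 x = 1)
    (hwrec : ∀ t, 1 ≤ t → ∀ x,
      w (t + 1) x = w t x * Real.exp (-(η * f t x))
        + ((1 / (T : ℝ)) / (N : ℝ)) * ∑ y, w t y)
    (q : ℕ → Fin N → ℝ)
    (hq : ∀ t x, q t x = w t x / ∑ y, w t y)
    (t0 t1 : ℕ) (ht0 : 1 ≤ t0) (ht01 : t0 ≤ t1) (hlen : t1 - t0 + 1 ≤ T) :
    (∑ t ∈ Icc t0 t1, ∑ x, q t x * f t x)
      - (univ.inf' (univ_nonempty_iff.mpr ⟨⟨0, hN⟩⟩)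
          fun x => ∑ t ∈ Icc t0 t1, f t x)
    ≤ 2 * Real.log ((N : ℝ) * (T : ℝ)) / η
      + η * ∑ t ∈ Icc t0 t1, ∑ x, q t x * (f t x) ^ 2 := by
  have hNe : Nonempty (Fin N) := ⟨⟨0, hN⟩⟩
  have hN0 : (0:ℝ) < N := by exact_mod_cast hN
  have hT0 : (0:ℝ) < T := by exact_mod_cast hT
  -- positivity of weights
  have hwpos : ∀ t, 1 ≤ t → ∀ x, 0 < w t x := by
    intro t ht
    induction t, ht using Nat.le_induction with
    | base => intro x; rw [hw1]; norm_num
    | succ n hn ih =>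
      intro x
      rw [hwrec n hn]
      have hW : 0 < ∑ y, w n y := Finset.sum_pos (fun y _ => ih y) univ_nonempty
      have h1 : (0:ℝ) < (1 / (T : ℝ)) / (N : ℝ) := by positivity
      have h2 := mul_pos h1 hW
      nlinarith [mul_pos (ih x) (Real.exp_pos (-(η * f n x)))]
  have hWpos : ∀ t, 1 ≤ t → 0 < ∑ y, w t y :=
    fun t ht => Finset.sum_pos (fun y _ => hwpos t ht y) univ_nonempty
  have hqsum : ∀ t, 1 ≤ t → ∑ x, q t x = 1 := by
    intro t ht
    simp only [hq]
    rw [← Finset.sum_div, div_self (ne_of_gt (hWpos t ht))]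
  have hqpos : ∀ t, 1 ≤ t → ∀ x, 0 < q t x := by
    intro t ht x; rw [hq]; exact div_pos (hwpos t ht x) (hWpos t ht)
  -- the minimizer
  obtain ⟨xs, -, hxs⟩ := Finset.exists_mem_eq_inf'
    (univ_nonempty_iff.mpr ⟨⟨0, hN⟩⟩) (fun x => ∑ t ∈ Icc t0 t1, f t x)
  rw [hxs]
  have hcard : (Icc t0 t1).card = t1 - t0 + 1 := by rw [Nat.card_Icc]; omega
  have hlog1 : (1:ℝ) ≤ Real.log ((N:ℝ)*(T:ℝ)) := by
    have h3 : (3:ℝ) ≤ (N:ℝ)*(T:ℝ) := by exact_mod_cast hNT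
    have he : Real.exp 1 ≤ (N:ℝ)*(T:ℝ) := by linarith [Real.exp_one_lt_d9.le]
    calc (1:ℝ) = Real.log (Real.exp 1) := (Real.log_exp 1).symm
      _ ≤ _ := Real.log_le_log (Real.exp_pos 1) he
  have hSnn : 0 ≤ ∑ t ∈ Icc t0 t1, ∑ x, q t x * (f t x) ^ 2 := by
    refine Finset.sum_nonneg fun t htm => Finset.sum_nonneg fun x _ => ?_
    have ht1 : 1 ≤ t := le_trans ht0 (mem_Icc.mp htm).1
    exact mul_nonneg (hqpos t ht1 x).le (sq_nonneg _)
  by_cases hsmall : t1 - t0 + 1 ≤ 8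
  · -- short window: trivial bound via f - η f² ≤ 1/(4η)
    have hinf : 0 ≤ ∑ t ∈ Icc t0 t1, f t xs :=
      Finset.sum_nonneg fun t _ => hf t xs
    have hstep : ∀ t ∈ Icc t0 t1,
        (∑ x, q t x * f t x) - η * (∑ x, q t x * (f t x)^2) ≤ 1/(4*η) := by
      intro t htm
      have ht1 : 1 ≤ t := le_trans ht0 (mem_Icc.mp htm).1
      have h1 : (∑ x, q t x * f t x) - η * (∑ x, q t x * (f t x)^2)
          = ∑ x, (q t x * f t x - η * (q t x * (f t x)^2)) := by
        rw [Finset.sum_sub_distrib, Finset.mul_sum]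
      rw [h1]
      calc ∑ x, (q t x * f t x - η * (q t x * (f t x)^2))
          ≤ ∑ x, q t x * (1/(4*η)) := by
            refine Finset.sum_le_sum fun x _ => ?_
            have hq0 := (hqpos t ht1 x).le
            have hfx := hf t x
            have : f t x - η * (f t x)^2 ≤ 1/(4*η) := by
              rw [le_div_iff₀ (by positivity)]
              nlinarith [sq_nonneg (2*η*f t x - 1)]
            nlinarith
        _ = 1/(4*η) := by rw [← Finset.sum_mul, hqsum t ht1, one_mul]
    have hM : (∑ t ∈ Icc t0 t1, ∑ x, q t x * f t x)
        - η * (∑ t ∈ Icc t0 t1, ∑ x, q t x * (f t x)^2) ≤ 2/η := by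
      have h1 : (∑ t ∈ Icc t0 t1, ∑ x, q t x * f t x)
          - η * (∑ t ∈ Icc t0 t1, ∑ x, q t x * (f t x)^2)
          = ∑ t ∈ Icc t0 t1,
            ((∑ x, q t x * f t x) - η * (∑ x, q t x * (f t x)^2)) := by
        rw [Finset.sum_sub_distrib, Finset.mul_sum]
      rw [h1]
      calc ∑ t ∈ Icc t0 t1, ((∑ x, q t x * f t x) - η * (∑ x, q t x * (f t x)^2))
          ≤ ∑ t ∈ Icc t0 t1, (1/(4*η)) := Finset.sum_le_sum hstep
        _ = ((t1 - t0 + 1 : ℕ) : ℝ) * (1/(4*η)) := by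
            rw [Finset.sum_const, hcard, nsmul_eq_mul]
        _ ≤ 8 * (1/(4*η)) := by
            have : ((t1 - t0 + 1 : ℕ) : ℝ) ≤ 8 := by exact_mod_cast hsmall
            have : (0:ℝ) ≤ 1/(4*η) := by positivity
            nlinarith [this]
        _ = 2/η := by field_simp; ring
    have h2 : 2/η ≤ 2 * Real.log ((N:ℝ)*(T:ℝ)) / η := by
      gcongr
      linarith
    linarith
  · -- long window: full MW analysis
    push_neg at hsmall
    have hT9 : 9 ≤ T := by omega
    -- per-step upper bound on log of total weight
    have hstep : ∀ t, 1 ≤ t →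
        Real.log (∑ y, w (t+1) y) ≤ Real.log (∑ y, w t y)
          + (1/(T:ℝ) - η * (∑ x, q t x * f t x)
            + η^2 * (∑ x, q t x * (f t x)^2)) := by
      intro t ht
      have hWtpos := hWpos t ht
      have hWtne : (∑ y, w t y) ≠ 0 := ne_of_gt hWtpos
      have hsum : ∑ y, w (t+1) y
          = (∑ y, w t y * Real.exp (-(η * f t y))) + (1/(T:ℝ)) * ∑ y, w t y := by
        simp only [hwrec t ht, Finset.sum_add_distrib, Finset.sum_const, card_univ,
          Fintype.card_fin, nsmul_eq_mul]
        congr 1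
        field_simp
      have hm : ∑ x, w t x * f t x = (∑ y, w t y) * ∑ x, q t x * f t x := by
        rw [Finset.mul_sum]
        refine Finset.sum_congr rfl fun x _ => ?_
        rw [hq]; field_simp
      have hs : ∑ x, w t x * (f t x)^2 = (∑ y, w t y) * ∑ x, q t x * (f t x)^2 := by
        rw [Finset.mul_sum]
        refine Finset.sum_congr rfl fun x _ => ?_
        rw [hq]; field_simp
      have hA : ∑ y, w t y * Real.exp (-(η * f t y))
          ≤ (∑ y, w t y) - η * ((∑ y, w t y) * ∑ x, q t x * f t x)
            + η^2 * ((∑ y, w t y) * ∑ x, q t x * (f t x)^2) := by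
        have h1 : ∑ y, w t y * Real.exp (-(η * f t y))
            ≤ ∑ y, w t y * (1 - η * f t y + (η * f t y)^2) := by
          refine Finset.sum_le_sum fun y _ => ?_
          exact mul_le_mul_of_nonneg_left
            (mw1_exp_neg_le_quad (mul_nonneg hη.le (hf t y)))
            (le_of_lt (hwpos t ht y))
        have h2 : ∀ y : Fin N, w t y * (1 - η * f t y + (η * f t y)^2)
            = w t y - η * (w t y * f t y) + η^2 * (w t y * (f t y)^2) :=
          fun y => by ring
        simp_rw [h2, Finset.sum_add_distrib, Finset.sum_sub_distrib,
          ← Finset.mul_sum] at h1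
        rw [hm, hs] at h1
        exact h1
      set m := ∑ x, q t x * f t x with hmdef
      set s := ∑ x, q t x * (f t x)^2 with hsdef
      set u := 1 + 1/(T:ℝ) - η*m + η^2*s with hudef
      have hmul : (∑ y, w t y) * u
          = ((∑ y, w t y) - η * ((∑ y, w t y) * m) + η^2 * ((∑ y, w t y) * s))
            + (1/(T:ℝ)) * (∑ y, w t y) := by
        rw [hudef]; ring
      have hWu : ∑ y, w (t+1) y ≤ (∑ y, w t y) * u := by
        rw [hsum, hmul]
        linarith [hA]
      have hupos : 0 < u := by
        have h0 : 0 < (∑ y, w t y) * u :=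
          lt_of_lt_of_le (hWpos (t+1) (by omega)) hWu
        by_contra hcon
        push_neg at hcon
        nlinarith [hWtpos]
      calc Real.log (∑ y, w (t+1) y) ≤ Real.log ((∑ y, w t y) * u) :=
            Real.log_le_log (hWpos (t+1) (by omega)) hWu
        _ = Real.log (∑ y, w t y) + Real.log u :=
            Real.log_mul hWtne (ne_of_gt hupos)
        _ ≤ Real.log (∑ y, w t y) + (u - 1) := by
            linarith [Real.log_le_sub_one_of_pos hupos]
        _ = Real.log (∑ y, w t y) + (1/(T:ℝ) - η * m + η^2 * s) := by
            rw [hudef]; ring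
    -- telescoped upper bound
    have hup : Real.log (∑ y, w (t1+1) y) ≤ Real.log (∑ y, w t0 y)
        + ∑ t ∈ Icc t0 t1, (1/(T:ℝ) - η * (∑ x, q t x * f t x)
          + η^2 * (∑ x, q t x * (f t x)^2)) :=
      mw1_telescope_le (fun t => Real.log (∑ y, w t y))
        (fun t => 1/(T:ℝ) - η * (∑ x, q t x * f t x)
          + η^2 * (∑ x, q t x * (f t x)^2)) t0 t1 ht01
        (fun t ht1 _ => hstep t (le_trans ht0 ht1))
    have hsplit : ∑ t ∈ Icc t0 t1, (1/(T:ℝ) - η * (∑ x, q t x * f t x)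
          + η^2 * (∑ x, q t x * (f t x)^2))
        = ((t1 - t0 + 1 : ℕ) : ℝ) * (1/(T:ℝ))
          - η * (∑ t ∈ Icc t0 t1, ∑ x, q t x * f t x)
          + η^2 * (∑ t ∈ Icc t0 t1, ∑ x, q t x * (f t x)^2) := by
      rw [Finset.sum_add_distrib, Finset.sum_sub_distrib, Finset.sum_const,
        hcard, nsmul_eq_mul, Finset.mul_sum, Finset.mul_sum]
    have hlenT : ((t1 - t0 + 1 : ℕ) : ℝ) * (1/(T:ℝ)) ≤ 1 := by
      have h1 : ((t1 - t0 + 1 : ℕ) : ℝ) ≤ (T:ℝ) := by exact_mod_cast hlen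
      rw [mul_one_div, div_le_one hT0]
      exact h1
    -- lower bound via the minimizer
    have hexp : w t0 xs * Real.exp (-(η * ∑ t ∈ Icc t0 t1, f t xs))
        ≤ w (t1+1) xs := by
      have hc : -(η * ∑ t ∈ Icc t0 t1, f t xs)
          = ∑ t ∈ Icc t0 t1, -(η * f t xs) := by
        rw [Finset.mul_sum, ← Finset.sum_neg_distrib]
      rw [hc]
      refine mw1_exp_telescope (fun t => w t xs) (fun t => -(η * f t xs)) t0 t1 ht01 fun t ht1 _ => ?_
      show w t xs * Real.exp (-(η * f t xs)) ≤ w (t+1) xs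
      rw [hwrec t (le_trans ht0 ht1)]
      have h1 : (0:ℝ) ≤ (1 / (T : ℝ)) / (N : ℝ) * ∑ y, w t y :=
        mul_nonneg (by positivity) (hWpos t (le_trans ht0 ht1)).le
      linarith
    -- initial weight lower bound
    have hC : (∑ y, w t0 y) / ((N:ℝ) * ((T:ℝ)+1)) ≤ w t0 xs := by
      rcases eq_or_lt_of_le ht0 with h1 | h2
      · subst h1
        have hW1 : ∑ y, w 1 y = (N:ℝ) := by
          simp [hw1, Finset.sum_const, card_univ]
        rw [hW1, hw1]
        rw [div_le_one (by positivity)]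
        nlinarith
      · obtain ⟨s, rfl⟩ : ∃ s, t0 = s + 1 := ⟨t0 - 1, by omega⟩
        have hs : 1 ≤ s := by omega
        have hWs := hWpos s hs
        have hlow : (1/(T:ℝ)/(N:ℝ)) * ∑ y, w s y ≤ w (s+1) xs := by
          rw [hwrec s hs xs]
          nlinarith [mul_pos (hwpos s hs xs) (Real.exp_pos (-(η * f s xs)))]
        have hup2 : ∑ y, w (s+1) y ≤ (1 + 1/(T:ℝ)) * ∑ y, w s y := by
          have hterm : ∀ y : Fin N, w (s+1) y
              = w s y * Real.exp (-(η * f s y)) + (1/(T:ℝ)/(N:ℝ)) * ∑ z, w s z :=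
            fun y => hwrec s hs y
          simp only [hterm, Finset.sum_add_distrib, Finset.sum_const, card_univ,
            Fintype.card_fin, nsmul_eq_mul]
          have hA : ∑ y, w s y * Real.exp (-(η * f s y)) ≤ ∑ y, w s y := by
            refine Finset.sum_le_sum fun y _ => ?_
            have := Real.exp_le_one_iff.mpr
              (by nlinarith [hf s y, hη.le] : -(η * f s y) ≤ 0)
            nlinarith [hwpos s hs y]
          have hNN : (N:ℝ) * ((1/(T:ℝ)/(N:ℝ)) * ∑ z, w s z)
              = (1/(T:ℝ)) * ∑ z, w s z := by
            field_simp
          rw [hNN]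
          linarith
        rw [div_le_iff₀ (by positivity)]
        calc ∑ y, w (s+1) y ≤ (1 + 1/(T:ℝ)) * ∑ y, w s y := hup2
          _ = ((1/(T:ℝ)/(N:ℝ)) * ∑ y, w s y) * ((N:ℝ) * ((T:ℝ)+1)) := by
              field_simp
          _ ≤ w (s+1) xs * ((N:ℝ) * ((T:ℝ)+1)) := by
              have hpos : (0:ℝ) < (N:ℝ) * ((T:ℝ)+1) := by positivity
              nlinarith [hlow]
    -- combine the log chain
    have hl1 : Real.log (w (t1+1) xs) ≤ Real.log (∑ y, w (t1+1) y) :=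
      Real.log_le_log (hwpos (t1+1) (by omega) xs)
        (Finset.single_le_sum (fun y _ => (hwpos (t1+1) (by omega) y).le)
          (mem_univ xs))
    have hl2 : Real.log (w t0 xs) - η * (∑ t ∈ Icc t0 t1, f t xs)
        ≤ Real.log (w (t1+1) xs) := by
      have h1 : Real.log (w t0 xs * Real.exp (-(η * ∑ t ∈ Icc t0 t1, f t xs)))
          = Real.log (w t0 xs) - η * (∑ t ∈ Icc t0 t1, f t xs) := by
        rw [Real.log_mul (ne_of_gt (hwpos t0 ht0 xs)) (Real.exp_ne_zero _),
          Real.log_exp]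
        ring
      rw [← h1]
      exact Real.log_le_log
        (mul_pos (hwpos t0 ht0 xs) (Real.exp_pos _)) hexp
    have hl3 : Real.log (∑ y, w t0 y) - Real.log ((N:ℝ)*((T:ℝ)+1))
        ≤ Real.log (w t0 xs) := by
      have h1 : Real.log ((∑ y, w t0 y) / ((N:ℝ)*((T:ℝ)+1)))
          = Real.log (∑ y, w t0 y) - Real.log ((N:ℝ)*((T:ℝ)+1)) :=
        Real.log_div (ne_of_gt (hWpos t0 ht0)) (by positivity)
      rw [← h1]
      exact Real.log_le_log (div_pos (hWpos t0 ht0) (by positivity)) hC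
    have hnum := mw1_numeric N T hN hT9
    rw [hsplit] at hup
    -- final arithmetic
    have hfinal : η * ((∑ t ∈ Icc t0 t1, ∑ x, q t x * f t x)
        - ∑ t ∈ Icc t0 t1, f t xs)
        ≤ 2 * Real.log ((N:ℝ)*(T:ℝ))
          + η^2 * ∑ t ∈ Icc t0 t1, ∑ x, q t x * (f t x)^2 := by
      have hexpand : η * ((∑ t ∈ Icc t0 t1, ∑ x, q t x * f t x)
          - ∑ t ∈ Icc t0 t1, f t xs)
          = η * (∑ t ∈ Icc t0 t1, ∑ x, q t x * f t x)
            - η * ∑ t ∈ Icc t0 t1, f t xs := by ring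
      rw [hexpand]
      linarith [hl1, hl2, hl3, hup, hlenT, hnum]
    have hrhs : η * (2 * Real.log ((N:ℝ)*(T:ℝ)) / η
        + η * ∑ t ∈ Icc t0 t1, ∑ x, q t x * (f t x)^2)
        = 2 * Real.log ((N:ℝ)*(T:ℝ))
          + η^2 * ∑ t ∈ Icc t0 t1, ∑ x, q t x * (f t x)^2 := by
      field_simp
    refine le_of_mul_le_mul_left ?_ hη
    rw [hrhs]
    linarith [hfinal]
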